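/- Consider three fee-less constant product AMMs forming a loop on three tokens: AMM ν (ν = 1, 2, 3) has positive reserves (x_ν, y_ν) with invariant k_ν = x_ν y_ν, where AMM 1 converts token 1 into token 2, AMM 2 converts token 2 into token 3, and AMM 3 converts token 3 into token 1, each via the output rule out_ν(u) = y_ν − k_ν/(x_ν + u). If the product of marginal prices around the loop satisfies (y₁/x₁)·(y₂/x₂)·(y₃/x₃) > 1, then there exists δ > 0 such that g(δ) = out₃(out₂(out₁(δ))) > δ, i.e. trading a sufficiently small amount of token 1 around the loop yields a strict arbitrage profit in token 1. -/
import Mathlib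


/-- Three fee-less constant product AMMs form a loop on three tokens, AMM ν having
reserves `(x_ν, y_ν)` and output rule `u ↦ y_ν − x_ν y_ν/(x_ν + u)`. If the product
of marginal prices around the loop exceeds 1, then some small amount `δ > 0` of
token 1 traded around the loop returns strictly more than `δ`. -/
theorem triangular_arbitrage (x₁ y₁ x₂ y₂ x₃ y₃ : ℝ)
    (hx₁ : 0 < x₁) (hy₁ : 0 < y₁) (hx₂ : 0 < x₂) (hy₂ : 0 < y₂)
    (hx₃ : 0 < x₃) (hy₃ : 0 < y₃)
    (hloop : 1 < (y₁ / x₁) * (y₂ / x₂) * (y₃ / x₃)) :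
    ∃ δ : ℝ, 0 < δ ∧
      δ < y₃ - (x₃ * y₃) /
        (x₃ + (y₂ - (x₂ * y₂) / (x₂ + (y₁ - (x₁ * y₁) / (x₁ + δ))))) := by
  have hP : x₁ * x₂ * x₃ < y₁ * y₂ * y₃ := by
    rw [div_mul_div_comm, div_mul_div_comm, one_lt_div (by positivity)] at hloop
    exact hloop
  set D : ℝ := x₂ * x₃ + x₃ * y₁ + y₁ * y₂ with hD
  have hDpos : 0 < D := by positivity
  set δ : ℝ := (y₁ * y₂ * y₃ - x₁ * x₂ * x₃) / (2 * D) with hdδ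
  have hδ : 0 < δ := by
    apply div_pos (by linarith) (by positivity)
  have hkey : δ * D < y₁ * y₂ * y₃ - x₁ * x₂ * x₃ := by
    rw [hdδ, div_mul_eq_mul_div, div_lt_iff₀ (by positivity)]
    nlinarith
  refine ⟨δ, hδ, ?_⟩
  have h1den : (0:ℝ) < x₁ + δ := by linarith
  have h1 : y₁ - x₁ * y₁ / (x₁ + δ) = y₁ * δ / (x₁ + δ) := by
    field_simp; ring
  rw [h1]
  have h2dpos : (0:ℝ) < x₂ * (x₁ + δ) + y₁ * δ := by positivity
  have h2den : (0:ℝ) < x₂ + y₁ * δ / (x₁ + δ) := by positivity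
  have h2 : y₂ - x₂ * y₂ / (x₂ + y₁ * δ / (x₁ + δ))
      = y₂ * (y₁ * δ) / (x₂ * (x₁ + δ) + y₁ * δ) := by
    rw [eq_div_iff h2dpos.ne']
    field_simp
    ring
  rw [h2]
  have h3dpos : (0:ℝ) < x₃ * (x₂ * (x₁ + δ) + y₁ * δ) + y₂ * (y₁ * δ) := by positivity
  have h3den : (0:ℝ) < x₃ + y₂ * (y₁ * δ) / (x₂ * (x₁ + δ) + y₁ * δ) := by positivity
  have h3 : y₃ - x₃ * y₃ / (x₃ + y₂ * (y₁ * δ) / (x₂ * (x₁ + δ) + y₁ * δ))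
      = y₃ * (y₂ * (y₁ * δ)) / (x₃ * (x₂ * (x₁ + δ) + y₁ * δ) + y₂ * (y₁ * δ)) := by
    field_simp
    ring
  rw [h3, lt_div_iff₀ h3dpos]
  rw [hD] at hkey
  nlinarith [mul_lt_mul_of_pos_left hkey hδ]
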